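/- Let π be a permutation gate in 𝒞₃ that is in staircase form, and let the descending multiplication on 𝔽₂ⁿ be defined by eᵢeⱼ := π(eᵢ+eⱼ) + eᵢ + eⱼ extended bilinearly. Then for every S ⊆ [n], π(∑_{i∈S} eᵢ) = ∑_{∅≠T⊆S} ∏_{i∈T} eᵢ; that is, the permutation associated to the induced descending multiplication is the original π. -/

import Mathlib

/-! Common framework: qubit gates, the Pauli group, the Clifford hierarchy,
permutation gates, Toffoli gates and staircase form, descending multiplications,
multilinear polynomial representations. -/

/-- Vectors in `𝔽₂ⁿ`, indexing computational basis states. -/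
abbrev QV (n : ℕ) := Fin n → ZMod 2

/-- `n`-qubit gates: `2ⁿ × 2ⁿ` complex matrices indexed by `𝔽₂ⁿ`. -/
abbrev QMat (n : ℕ) := Matrix (QV n) (QV n) ℂ

/-- Standard basis vector `eᵢ` of `𝔽₂ⁿ`. -/
def stdBasis (n : ℕ) (i : Fin n) : QV n := fun m => if m = i then 1 else 0

/-- The gate `X^u Z^z`, sending `|b⟩` to `(-1)^(z·b) |b+u⟩`. -/
noncomputable def XZGate (n : ℕ) (u z : QV n) : QMat n :=
  fun a b => if a = b + u then (-1 : ℂ) ^ (∑ i, (z i).val * (b i).val) else 0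

/-- The Pauli group on `n` qubits: gates `c·P₁⊗⋯⊗Pₙ`, `c ∈ {±1, ±i}`,
`Pᵢ ∈ {I,X,Y,Z}`, equivalently phases times `X^u Z^z`. -/
def PauliGroup (n : ℕ) : Set (QMat n) :=
  { P | ∃ (c : ℂ) (u z : QV n),
      (c = 1 ∨ c = -1 ∨ c = Complex.I ∨ c = -Complex.I) ∧ P = c • XZGate n u z }

/-- Level `k` of the Clifford hierarchy `𝒞ₖ` (level 1 is the Pauli group,
level 2 the Clifford group; level 0 is junk/empty). -/
def CliffordLevel (n : ℕ) : ℕ → Set (QMat n)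
  | 0 => ∅
  | 1 => PauliGroup n
  | (k+2) => { U | U ∈ Matrix.unitaryGroup (QV n) ℂ ∧
      ∀ P ∈ PauliGroup n, U * P * star U ∈ CliffordLevel n (k+1) }

/-- The permutation gate of a permutation `f` of `𝔽₂ⁿ`: sends `|v⟩` to `|f v⟩`. -/
noncomputable def permGate (n : ℕ) (f : QV n ≃ QV n) : QMat n :=
  fun a b => if a = f b then 1 else 0

/-- A diagonal gate. -/
def IsDiagonal (n : ℕ) (d : QMat n) : Prop := ∀ a b : QV n, a ≠ b → d a b = 0

/-- A gate is semi-Clifford if it equals `φ₁ d φ₂` for Clifford `φ₁, φ₂` and diagonal `d`. -/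
def IsSemiClifford (n : ℕ) (U : QMat n) : Prop :=
  ∃ φ₁ d φ₂ : QMat n, φ₁ ∈ CliffordLevel n 2 ∧ φ₂ ∈ CliffordLevel n 2 ∧
    IsDiagonal n d ∧ U = φ₁ * d * φ₂

/-- The underlying map of the Toffoli gate `TOF_{i,j,k}`: `v ↦ v + (vᵢvⱼ)·eₖ`. -/
def tofFun (n : ℕ) (i j k : Fin n) (v : QV n) : QV n :=
  fun m => if m = k then v m + v i * v j else v m

/-- A map on `𝔽₂ⁿ` is in staircase form if it is a product (applied left-to-right)
of pairwise distinct Toffoli gates `TOF_{i,j,k}` with `i<j<k` and with targets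
nondecreasing in the order the gates are applied. -/
def IsStaircase (n : ℕ) (g : QV n → QV n) : Prop :=
  ∃ L : List (Fin n × Fin n × Fin n),
    L.Nodup ∧
    (∀ t ∈ L, t.1 < t.2.1 ∧ t.2.1 < t.2.2) ∧
    List.Chain' (fun s t => s.2.2 ≤ t.2.2) L ∧
    g = fun v => L.foldl (fun w t => tofFun n t.1 t.2.1 t.2.2 w) v

/-- A descending multiplication on `𝔽₂ⁿ`: bilinear, associative, commutative,
`eᵢeᵢ = 0`, and for `i < j`, `eᵢeⱼ ∈ span{eₖ : k > j}`. -/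
def IsDescendingMul (n : ℕ) (mul : QV n → QV n → QV n) : Prop :=
  (∀ u v w : QV n, mul (u + v) w = mul u w + mul v w) ∧
  (∀ u v w : QV n, mul u (v + w) = mul u v + mul u w) ∧
  (∀ u v w : QV n, mul (mul u v) w = mul u (mul v w)) ∧
  (∀ u v : QV n, mul u v = mul v u) ∧
  (∀ i : Fin n, mul (stdBasis n i) (stdBasis n i) = 0) ∧
  (∀ i j : Fin n, i < j → ∀ m : Fin n, m ≤ j → mul (stdBasis n i) (stdBasis n j) m = 0)

/-- The product `∏_{i ∈ l} eᵢ` under a multiplication, for a list `l` (junk `0` on `[]`). -/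
def dmProdList (n : ℕ) (mul : QV n → QV n → QV n) : List (Fin n) → QV n
  | [] => 0
  | [i] => stdBasis n i
  | i :: j :: rest => mul (stdBasis n i) (dmProdList n mul (j :: rest))

/-- The product `∏_{i ∈ T} eᵢ` under a multiplication. -/
def dmProd (n : ℕ) (mul : QV n → QV n → QV n) (T : Finset (Fin n)) : QV n :=
  dmProdList n mul (T.sort (· ≤ ·))

/-- `g` is the map `∑_{i∈S} eᵢ ↦ ∑_{∅≠T⊆S} ∏_{i∈T} eᵢ` associated to a multiplication. -/
def dmPiSpec (n : ℕ) (mul : QV n → QV n → QV n) (g : QV n → QV n) : Prop :=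
  ∀ S : Finset (Fin n),
    g (∑ i ∈ S, stdBasis n i) = ∑ T ∈ S.powerset.erase ∅, dmProd n mul T

/-- The bilinear extension of `eᵢeⱼ := g(eᵢ+eⱼ) + eᵢ + eⱼ`. -/
def inducedMul (n : ℕ) (g : QV n → QV n) (u v : QV n) : QV n :=
  ∑ i : Fin n, ∑ j : Fin n,
    (u i * v j) • (g (stdBasis n i + stdBasis n j) + stdBasis n i + stdBasis n j)

/-- Coefficient of the monomial `∏_{i∈T} aᵢ` in the unique multilinear polynomial
over `𝔽₂` representing `g : 𝔽₂ⁿ → 𝔽₂` (Möbius inversion over `𝔽₂`). -/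
def mlCoeff (n : ℕ) (g : QV n → ZMod 2) (T : Finset (Fin n)) : ZMod 2 :=
  ∑ R ∈ T.powerset, g (∑ i ∈ R, stdBasis n i)

/-- Strictly lower triangular matrix. -/
def StrictLowerTri (n : ℕ) (A : Matrix (Fin n) (Fin n) (ZMod 2)) : Prop :=
  ∀ p q : Fin n, p ≤ q → A p q = 0

/-- Multiplication of basis vectors for the gate `U_k`: the basis of `𝔽₂^(2^k-1)` is
indexed by nonempty subsets `S ⊆ [k]`, encoded as indices `a` via the binary digits of
`a+1`; `e_S e_T = e_{S∪T}` if `S ∩ T = ∅` and `e_S e_T = 0` otherwise. -/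
def ukBasisMul (k : ℕ) (a b : Fin (2 ^ k - 1)) : QV (2 ^ k - 1) :=
  if (a.val + 1) &&& (b.val + 1) = 0 then
    (if h : a.val + b.val + 1 < 2 ^ k - 1 then stdBasis (2 ^ k - 1) ⟨a.val + b.val + 1, h⟩
     else 0)
  else 0

/-- The descending multiplication defining `U_k`, extended bilinearly. -/
def ukMul (k : ℕ) (u v : QV (2 ^ k - 1)) : QV (2 ^ k - 1) :=
  ∑ a : Fin (2 ^ k - 1), ∑ b : Fin (2 ^ k - 1), (u a * v b) • ukBasisMul k a b


-- lemmas
lemma permGate_mul (n : ℕ) (f g : QV n ≃ QV n) :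
    permGate n f * permGate n g = permGate n (g.trans f) := by
  ext a b
  simp only [Matrix.mul_apply, permGate, Equiv.trans_apply, ite_mul, one_mul, zero_mul]
  rw [Finset.sum_eq_single (g b)]
  · simp; congr
  · intro c _ hc; simp [hc]
  · simp

lemma star_permGate (n : ℕ) (f : QV n ≃ QV n) :
    star (permGate n f) = permGate n f.symm := by
  ext a b
  simp only [Matrix.star_apply, permGate]
  by_cases h : b = f a
  · simp [h]
  · rw [if_neg h, star_zero, if_neg]
    intro hh; exact h (by rw [hh]; simp)

lemma XZGate_zero (n : ℕ) (u : QV n) :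
    XZGate n u 0 = permGate n (Equiv.addRight u) := by
  ext a b
  simp [XZGate, permGate]; congr

lemma pauli_perm {n : ℕ} {h : QV n ≃ QV n} (hp : permGate n h ∈ PauliGroup n) :
    ∀ v, h v = v + h 0 := by
  obtain ⟨c, u, z, hc, heq⟩ := hp
  have key : ∀ v, h v = v + u := by
    intro v
    by_contra hne
    have := congrFun (congrFun heq (h v)) v
    simp only [permGate, if_pos rfl, Matrix.smul_apply, XZGate, if_neg hne, smul_zero] at this
    exact one_ne_zero this
  intro v
  rw [key v, key 0, zero_add]

lemma qv_add_self {n : ℕ} (a : QV n) : a + a = 0 := by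
  funext m
  have h : ∀ b : ZMod 2, b + b = 0 := by decide
  exact h (a m)

lemma key_cocycle {n : ℕ} {f : QV n ≃ QV n} (hf : permGate n f ∈ CliffordLevel n 3)
    (u : QV n) : ∀ x y : QV n,
    f (f.symm (x + y) + u) = f (f.symm x + u) + f (f.symm y + u) + f (f.symm 0 + u) := by
  have hpauli : ∀ w : QV n, XZGate n w 0 ∈ PauliGroup n :=
    fun w => ⟨1, w, 0, Or.inl rfl, (one_smul ℂ _).symm⟩
  set Gu : QV n ≃ QV n := f.symm.trans ((Equiv.addRight u).trans f) with hGudef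
  have hGuapp : ∀ v, Gu v = f (f.symm v + u) := fun v => rfl
  have hGu : permGate n Gu ∈ CliffordLevel n 2 := by
    have h2 := hf.2 (XZGate n u 0) (hpauli u)
    rwa [XZGate_zero, star_permGate, permGate_mul, permGate_mul] at h2
  have hH : ∀ w v : QV n,
      Gu (Gu.symm v + w) = v + Gu (Gu.symm 0 + w) := by
    intro w v
    have h1 := hGu.2 (XZGate n w 0) (hpauli w)
    rw [XZGate_zero, star_permGate, permGate_mul, permGate_mul] at h1
    have := pauli_perm (h := Gu.symm.trans ((Equiv.addRight w).trans Gu)) h1 v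
    simpa [Equiv.trans_apply, Equiv.coe_addRight] using this
  intro x y
  have e1 : Gu (x + y) = Gu x + Gu (Gu.symm 0 + y) := by
    have := hH y (Gu x); rwa [Equiv.symm_apply_apply] at this
  have e2 : Gu y = Gu 0 + Gu (Gu.symm 0 + y) := by
    have := hH y (Gu 0); rwa [Equiv.symm_apply_apply, zero_add] at this
  have e3 : Gu (Gu.symm 0 + y) = Gu 0 + Gu y := by
    rw [e2, ← add_assoc, qv_add_self, zero_add]
  rw [← hGuapp, ← hGuapp, ← hGuapp, ← hGuapp, e1, e3]
  abel

lemma foldl_fixed {n : ℕ} (v : QV n) (L : List (Fin n × Fin n × Fin n))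
    (h : ∀ t ∈ L, tofFun n t.1 t.2.1 t.2.2 v = v) :
    L.foldl (fun w t => tofFun n t.1 t.2.1 t.2.2 w) v = v := by
  induction L with
  | nil => rfl
  | cons t L ih =>
    rw [List.foldl_cons, h t List.mem_cons_self]
    exact ih fun s hs => h s (List.mem_cons_of_mem _ hs)

lemma staircase_fix {n : ℕ} {f : QV n ≃ QV n} (hst : IsStaircase n ⇑f) :
    f 0 = 0 ∧ ∀ i, f (stdBasis n i) = stdBasis n i := by
  obtain ⟨L, -, hlt, -, hg⟩ := hst
  constructor
  · show (⇑f) 0 = 0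
    rw [hg]
    exact foldl_fixed _ _ fun t _ => by funext m; simp [tofFun]
  · intro i
    show (⇑f) (stdBasis n i) = stdBasis n i
    rw [hg]
    refine foldl_fixed _ _ fun t ht => ?_
    have hij : t.1 ≠ t.2.1 := ne_of_lt (hlt t ht).1
    have hz : stdBasis n i t.1 * stdBasis n i t.2.1 = 0 := by
      by_cases h1 : t.1 = i <;> by_cases h2 : t.2.1 = i <;>
        simp [stdBasis, h1, h2]
      exact hij (h1.trans h2.symm)
    funext m
    simp [tofFun, hz]

lemma qv_two_nsmul {n : ℕ} (a : QV n) : (2:ℕ) • a = 0 := by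
  rw [two_nsmul, qv_add_self]

lemma addmap_sum {n : ℕ} {β : Type*} {M : QV n → QV n} (h0 : M 0 = 0)
    (hadd : ∀ x y, M (x + y) = M x + M y) (s : Finset β) (g : β → QV n) :
    M (∑ x ∈ s, g x) = ∑ x ∈ s, M (g x) := by
  classical
  induction s using Finset.induction with
  | empty => simpa using h0
  | insert _ _ hx ih => rw [Finset.sum_insert hx, hadd, ih, Finset.sum_insert hx]

lemma sum_smul_stdBasis {n : ℕ} (v : QV n) : ∑ j, (v j) • stdBasis n j = v := by
  funext m
  rw [Finset.sum_apply]
  rw [Finset.sum_eq_single m]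
  · simp [stdBasis]
  · intro j _ hj
    simp [stdBasis, Ne.symm hj]
  · simp


/-- permutation → multiplication → permutation is the identity: for a
staircase-form `𝒞₃` permutation gate `π`, the permutation associated to the induced
descending multiplication is `π` itself. -/
theorem stmt4 (n : ℕ) (hn : 1 ≤ n) (f : QV n ≃ QV n)
    (hf : permGate n f ∈ CliffordLevel n 3) (hst : IsStaircase n ⇑f) :
    dmPiSpec n (inducedMul n ⇑f) ⇑f := by
  obtain ⟨hf0, hfe⟩ := staircase_fix hst
  have hsymm0 : f.symm 0 = 0 := (Equiv.symm_apply_eq f).2 hf0.symm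
  have hsymme : ∀ j, f.symm (stdBasis n j) = stdBasis n j :=
    fun j => (Equiv.symm_apply_eq f).2 (hfe j).symm
  intro S
  induction S using Finset.strongInduction with
  | _ S ih =>
  rcases S.eq_empty_or_nonempty with rfl | hne
  · simp [hf0]
  · have hiS : S.min' hne ∈ S := S.min'_mem hne
    generalize hidef : S.min' hne = i at hiS
    have hiS' : i ∉ S.erase i := Finset.notMem_erase i S
    have hS : insert i (S.erase i) = S := Finset.insert_erase hiS
    have hlt : ∀ j ∈ S.erase i, i < j := by
      intro j hj
      refine lt_of_le_of_ne ?_ (Ne.symm (Finset.ne_of_mem_erase hj))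
      rw [← hidef]; exact S.min'_le j (Finset.mem_of_mem_erase hj)
    set M : QV n → QV n :=
      fun v => f (f.symm v + stdBasis n i) + v + stdBasis n i with hMdef
    have hC : f (f.symm 0 + stdBasis n i) = stdBasis n i := by
      rw [hsymm0, zero_add, hfe i]
    have hM0 : M 0 = 0 := by
      simp only [hMdef, hC, add_zero]
      exact qv_add_self _
    have hMadd : ∀ x y, M (x + y) = M x + M y := by
      intro x y
      simp only [hMdef]
      rw [key_cocycle hf (stdBasis n i) x y, hC]
      abel
    have hMf : ∀ w, f (w + stdBasis n i) = M (f w) + f w + stdBasis n i := by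
      intro w
      simp only [hMdef, Equiv.symm_apply_apply]
      have h2 : ∀ (A b c : QV n), A + b + c + b + c = A := by
        intro A b c
        calc A + b + c + b + c = A + (b + b) + (c + c) := by abel
        _ = A := by rw [qv_add_self, qv_add_self, add_zero, add_zero]
      exact (h2 _ _ _).symm
    have hmul : ∀ v, inducedMul n ⇑f (stdBasis n i) v = M v := by
      intro v
      unfold inducedMul
      rw [Finset.sum_eq_single i]
      · have h1 : stdBasis n i i = (1 : ZMod 2) := by simp [stdBasis]
        have hterm : ∀ j, f (stdBasis n i + stdBasis n j) + stdBasis n i + stdBasis n j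
            = M (stdBasis n j) := by
          intro j
          simp only [hMdef, hsymme]
          rw [add_comm (stdBasis n j) (stdBasis n i)]
          abel
        have hsm : ∀ (c : ZMod 2) (a : QV n), c • M a = M (c • a) := by
          intro c a
          rcases (by decide : ∀ c : ZMod 2, c = 0 ∨ c = 1) c with rfl | rfl
          · simp [hM0]
          · simp
        simp only [h1, one_mul, hterm, hsm]
        rw [← addmap_sum hM0 hMadd, sum_smul_stdBasis]
      · intro a _ ha
        have hz : stdBasis n i a = 0 := by simp [stdBasis, ha]
        simp [hz]
      · simp
    have hdm : ∀ T ∈ (S.erase i).powerset.erase ∅,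
        dmProd n (inducedMul n ⇑f) (insert i T) = M (dmProd n (inducedMul n ⇑f) T) := by
      intro T hT
      rw [Finset.mem_erase, Finset.mem_powerset] at hT
      obtain ⟨hTne, hTs⟩ := hT
      have hle : ∀ b ∈ T, i ≤ b := fun b hb => le_of_lt (hlt b (hTs hb))
      have hiT : i ∉ T := fun h => lt_irrefl i (hlt i (hTs h))
      rw [dmProd, Finset.sort_insert _ hle hiT]
      rcases hl : T.sort (· ≤ ·) with _ | ⟨j, rest⟩
      · obtain ⟨a, ha⟩ := Finset.nonempty_iff_ne_empty.mpr hTne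
        have := (Finset.mem_sort (α := Fin n) (· ≤ ·)).mpr ha
        rw [hl] at this
        exact absurd this List.not_mem_nil
      · rw [dmProd, hl]
        exact hmul _
    have hsing : dmProd n (inducedMul n ⇑f) (insert i ∅) = stdBasis n i := by
      rw [insert_empty_eq, dmProd, Finset.sort_singleton]
      rfl
    have hp : S.powerset
        = (S.erase i).powerset ∪ (S.erase i).powerset.image (insert i) := by
      conv_lhs => rw [← hS]
      rw [Finset.powerset_insert]
    have hB : ∅ ∉ (S.erase i).powerset.image (insert i) := by
      simp only [Finset.mem_image, not_exists]
      intro T h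
      exact Finset.insert_ne_empty i T h.2
    have hdisj : Disjoint ((S.erase i).powerset.erase ∅)
        ((S.erase i).powerset.image (insert i)) := by
      rw [Finset.disjoint_left]
      intro T hT1 hT2
      obtain ⟨T', -, rfl⟩ := Finset.mem_image.mp hT2
      have h1 := Finset.mem_powerset.mp (Finset.mem_of_mem_erase hT1)
      exact hiS' (h1 (Finset.mem_insert_self i T'))
    have h2 : ∑ T ∈ (S.erase i).powerset, dmProd n (inducedMul n ⇑f) (insert i T)
        = stdBasis n i
          + ∑ T ∈ (S.erase i).powerset.erase ∅, dmProd n (inducedMul n ⇑f) (insert i T) := by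
      conv_lhs => rw [← Finset.insert_erase (Finset.empty_mem_powerset (S.erase i))]
      rw [Finset.sum_insert (Finset.notMem_erase ∅ _), hsing]
    have hsplit : ∑ T ∈ S.powerset.erase ∅, dmProd n (inducedMul n ⇑f) T
        = stdBasis n i + ∑ T ∈ (S.erase i).powerset.erase ∅, dmProd n (inducedMul n ⇑f) T
          + ∑ T ∈ (S.erase i).powerset.erase ∅, dmProd n (inducedMul n ⇑f) (insert i T) := by
      rw [hp, Finset.erase_union_distrib, Finset.erase_eq_of_notMem hB,
        Finset.sum_union hdisj,
        Finset.sum_image (fun x hx y hy hxy => by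
          have hxi : i ∉ x := fun h => hiS' (Finset.mem_powerset.mp hx h)
          have hyi : i ∉ y := fun h => hiS' (Finset.mem_powerset.mp hy h)
          rw [← Finset.erase_insert hxi, hxy, Finset.erase_insert hyi]), h2]
      abel
    have hih := ih (S.erase i) (Finset.erase_ssubset hiS)
    have hsum : ∑ j ∈ S, stdBasis n j
        = (∑ j ∈ S.erase i, stdBasis n j) + stdBasis n i := by
      conv_lhs => rw [← hS]
      rw [Finset.sum_insert hiS', add_comm]
    rw [hsum, hMf, hih, addmap_sum hM0 hMadd,
      Finset.sum_congr rfl (fun T hT => (hdm T hT).symm), hsplit]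
    abel
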